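/- Interpolation Hölder bound: Let c : [0,∞) → L²(Ω) and suppose there are constants C₁, C₂, C₃ > 0 and η₀ > 0 such that for every η ∈ (0, η₀] there exists a family c^η(·,t) with (i) ‖c^η(·,t) − c(·,t)‖²_{L²} ≤ C₁ η for all t, (ii) ‖∇c^η(·,t)‖_{L²} ≤ C₂/η for all t, and (iii) |∫_Ω (c^η(x,t) − c^η(x,τ))(c(x,t) − c(x,τ)) dx| ≤ C₃ η^{-1} |t−τ|^{1/2} whenever |t−τ| ≤ 1. Then there is C > 0 with ‖c(·,t) − c(·,τ)‖²_{L²(Ω)} ≤ C |t−τ|^{1/4} for all |t−τ| ≤ min(1, η₀⁴); i.e. c is Hölder continuous with exponent 1/8 in L²(Ω). -/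

import Mathlib

open RealInnerProductSpace

theorem stmt_18 {H : Type*} [NormedAddCommGroup H] [InnerProductSpace ℝ H]
    (c : ℝ → H) (cη : ℝ → ℝ → H) (D : ℝ → ℝ → H)
    (C₁ C₂ C₃ η₀ : ℝ) (hC₁ : 0 < C₁) (hC₂ : 0 < C₂) (hC₃ : 0 < C₃) (hη₀ : 0 < η₀)
    (h_approx : ∀ η ∈ Set.Ioc (0:ℝ) η₀, ∀ t ≥ (0:ℝ),
      ‖cη η t - c t‖^2 ≤ C₁ * η)
    (h_grad : ∀ η ∈ Set.Ioc (0:ℝ) η₀, ∀ t ≥ (0:ℝ),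
      ‖D η t‖ ≤ C₂ / η)
    (h_bound : ∀ t ≥ (0:ℝ), ‖c t‖ ≤ C₂)
    (h_pair : ∀ η ∈ Set.Ioc (0:ℝ) η₀, ∀ t ≥ (0:ℝ), ∀ τ ≥ (0:ℝ), |t - τ| ≤ 1 →
      |⟪cη η t - cη η τ, c t - c τ⟫| ≤ C₃ * η⁻¹ * |t - τ| ^ ((1:ℝ)/2)) :
    ∃ C > 0, ∀ t ≥ (0:ℝ), ∀ τ ≥ (0:ℝ), |t - τ| ≤ min 1 (η₀^4) →
      ‖c t - c τ‖^2 ≤ C * |t - τ| ^ ((1:ℝ)/4) := by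
  refine ⟨4*C₁ + 2*C₃, by positivity, ?_⟩
  intro t ht τ hτ hd
  rcases eq_or_ne t τ with rfl | hne
  · simp
  set d := |t - τ| with hdd
  have hd0 : 0 < d := abs_pos.2 (sub_ne_zero.2 hne)
  set η := d ^ ((1:ℝ)/4) with hη
  have hη0 : 0 < η := Real.rpow_pos_of_pos hd0 _
  have hd1 : d ≤ 1 := le_trans hd (min_le_left _ _)
  have hdη4 : d ≤ η₀^4 := le_trans hd (min_le_right _ _)
  have hηη₀ : η ≤ η₀ := by
    have h4 : (η₀^4 : ℝ) ^ ((1:ℝ)/4) = η₀ := by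
      rw [← Real.rpow_natCast η₀ 4, ← Real.rpow_mul hη₀.le]
      norm_num
    calc η ≤ (η₀^4) ^ ((1:ℝ)/4) := Real.rpow_le_rpow hd0.le hdη4 (by norm_num)
      _ = η₀ := h4
  have hmem : η ∈ Set.Ioc (0:ℝ) η₀ := ⟨hη0, hηη₀⟩
  have h1 := h_approx η hmem t ht
  have h2 := h_approx η hmem τ hτ
  have h3 := h_pair η hmem t ht τ hτ hd1
  set X := ‖c t - c τ‖ with hX
  have hX0 : 0 ≤ X := norm_nonneg _
  set s := Real.sqrt (C₁ * η) with hs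
  have hs0 : 0 ≤ s := Real.sqrt_nonneg _
  have hs2 : s ^ 2 = C₁ * η := Real.sq_sqrt (by positivity)
  have ha : ‖c t - cη η t‖ ≤ s := by
    rw [hs, ← Real.sqrt_sq (norm_nonneg (c t - cη η t))]
    exact Real.sqrt_le_sqrt (by rwa [norm_sub_rev])
  have hb : ‖cη η τ - c τ‖ ≤ s := by
    rw [hs, ← Real.sqrt_sq (norm_nonneg (cη η τ - c τ))]
    exact Real.sqrt_le_sqrt h2
  have hdecomp : (X : ℝ)^2 = ⟪c t - cη η t, c t - c τ⟫ +
      ⟪cη η t - cη η τ, c t - c τ⟫ + ⟪cη η τ - c τ, c t - c τ⟫ := by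
    have hsplit : c t - c τ = (c t - cη η t) + (cη η t - cη η τ) + (cη η τ - c τ) := by
      abel
    calc (X : ℝ)^2 = ⟪c t - c τ, c t - c τ⟫ := (real_inner_self_eq_norm_sq _).symm
      _ = _ := by nth_rewrite 1 [hsplit]
                  rw [inner_add_left, inner_add_left]
  have hcs1 : |⟪c t - cη η t, c t - c τ⟫| ≤ s * X :=
    le_trans (abs_real_inner_le_norm _ _) (mul_le_mul_of_nonneg_right ha hX0)
  have hcs2 : |⟪cη η τ - c τ, c t - c τ⟫| ≤ s * X :=
    le_trans (abs_real_inner_le_norm _ _) (mul_le_mul_of_nonneg_right hb hX0)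
  have hmid : |⟪cη η t - cη η τ, c t - c τ⟫| ≤ C₃ * η := by
    have hdη : d ^ ((1:ℝ)/2) = η ^ 2 := by
      rw [hη, ← Real.rpow_natCast (d ^ ((1:ℝ)/4)) 2, ← Real.rpow_mul hd0.le]
      norm_num
    calc |⟪cη η t - cη η τ, c t - c τ⟫| ≤ C₃ * η⁻¹ * d ^ ((1:ℝ)/2) := h3
      _ = C₃ * η := by rw [hdη]; field_simp
  have hkey : X ^ 2 ≤ 2 * s * X + C₃ * η := by
    have e1 := abs_le.1 hcs1
    have e2 := abs_le.1 hcs2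
    have e3 := abs_le.1 hmid
    nlinarith [e1.2, e2.2, e3.2]
  have hfin : X ^ 2 ≤ (4*C₁ + 2*C₃) * η := by
    nlinarith [sq_nonneg (X - 2*s), hη0.le]
  exact hfin
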